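/- Let A be an m×n complex matrix split as A = [[A₁₁, A₁₂],[A₂₁, A₂₂]] with A₁₁ of size n₁×n₁ (n₁ ≤ n, m ≥ n). Suppose (Q_L, R_L) is a QR decomposition of the left panel [A₁₁; A₂₁] (Q_L unitary m×m, R_L upper trapezoidal m×n₁), let [B₁₂; B₂₂] = Q_L^H [A₁₂; A₂₂] with B₁₂ of size n₁×(n−n₁), and suppose (Q_R, R_R) is a QR decomposition of B₂₂ (Q_R unitary (m−n₁)×(m−n₁), R_R upper trapezoidal). Then Q := Q_L · diag(I_{n₁}, Q_R) is unitary, R := [[R_L', B₁₂],[0, R_R]] (where R_L' denotes R_L) is upper trapezoidal, and A = Q R. -/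

import Mathlib

open Matrix

theorem stmt5 (n₁ n₂ m₂ : ℕ) (hmn : n₂ ≤ m₂)
    (A₁₁ : Matrix (Fin n₁) (Fin n₁) ℂ) (A₁₂ : Matrix (Fin n₁) (Fin n₂) ℂ)
    (A₂₁ : Matrix (Fin m₂) (Fin n₁) ℂ) (A₂₂ : Matrix (Fin m₂) (Fin n₂) ℂ)
    (QL : Matrix (Fin n₁ ⊕ Fin m₂) (Fin n₁ ⊕ Fin m₂) ℂ)
    (RL : Matrix (Fin n₁ ⊕ Fin m₂) (Fin n₁) ℂ)
    (hQL : QLᴴ * QL = 1 ∧ QL * QLᴴ = 1)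
    (hRL : ∀ i : Fin n₁ ⊕ Fin m₂, ∀ j : Fin n₁,
      (j : ℕ) < Sum.elim (fun a : Fin n₁ => (a : ℕ)) (fun a : Fin m₂ => n₁ + a) i →
      RL i j = 0)
    (hL : Matrix.fromRows A₁₁ A₂₁ = QL * RL)
    (B : Matrix (Fin n₁ ⊕ Fin m₂) (Fin n₂) ℂ)
    (hB : B = QLᴴ * Matrix.fromRows A₁₂ A₂₂)
    (B₁₂ : Matrix (Fin n₁) (Fin n₂) ℂ) (hB₁₂ : B₁₂ = Matrix.of fun i j => B (Sum.inl i) j)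
    (B₂₂ : Matrix (Fin m₂) (Fin n₂) ℂ) (hB₂₂ : B₂₂ = Matrix.of fun i j => B (Sum.inr i) j)
    (QR : Matrix (Fin m₂) (Fin m₂) ℂ) (RR : Matrix (Fin m₂) (Fin n₂) ℂ)
    (hQR : QRᴴ * QR = 1 ∧ QR * QRᴴ = 1)
    (hRR : ∀ i : Fin m₂, ∀ j : Fin n₂, (j : ℕ) < (i : ℕ) → RR i j = 0)
    (hR : B₂₂ = QR * RR)
    (RL' : Matrix (Fin n₁) (Fin n₁) ℂ) (hRL' : RL' = Matrix.of fun i j => RL (Sum.inl i) j)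
    (Q : Matrix (Fin n₁ ⊕ Fin m₂) (Fin n₁ ⊕ Fin m₂) ℂ)
    (hQ : Q = QL * Matrix.fromBlocks 1 0 0 QR)
    (R : Matrix (Fin n₁ ⊕ Fin m₂) (Fin n₁ ⊕ Fin n₂) ℂ)
    (hRdef : R = Matrix.fromBlocks RL' B₁₂ 0 RR) :
    (Qᴴ * Q = 1 ∧ Q * Qᴴ = 1) ∧
    (∀ i : Fin n₁ ⊕ Fin m₂, ∀ j : Fin n₁ ⊕ Fin n₂,
      Sum.elim (fun a : Fin n₁ => (a : ℕ)) (fun a : Fin n₂ => n₁ + a) j <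
        Sum.elim (fun a : Fin n₁ => (a : ℕ)) (fun a : Fin m₂ => n₁ + a) i →
      R i j = 0) ∧
    Matrix.fromBlocks A₁₁ A₁₂ A₂₁ A₂₂ = Q * R := by
  obtain ⟨hQL1, hQL2⟩ := hQL
  obtain ⟨hQR1, hQR2⟩ := hQR
  have hD1 : (Matrix.fromBlocks 1 0 0 QR)ᴴ * Matrix.fromBlocks 1 0 0 QR =
      (1 : Matrix (Fin n₁ ⊕ Fin m₂) (Fin n₁ ⊕ Fin m₂) ℂ) := by
    rw [Matrix.fromBlocks_conjTranspose, Matrix.fromBlocks_multiply]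
    simp [hQR1, Matrix.fromBlocks_one]
  have hD2 : Matrix.fromBlocks 1 0 0 QR * (Matrix.fromBlocks 1 0 0 QR)ᴴ =
      (1 : Matrix (Fin n₁ ⊕ Fin m₂) (Fin n₁ ⊕ Fin m₂) ℂ) := by
    rw [Matrix.fromBlocks_conjTranspose, Matrix.fromBlocks_multiply]
    simp [hQR2, Matrix.fromBlocks_one]
  refine ⟨⟨?_, ?_⟩, ?_, ?_⟩
  · rw [hQ, Matrix.conjTranspose_mul, Matrix.mul_assoc, ← Matrix.mul_assoc QLᴴ, hQL1,
      Matrix.one_mul, hD1]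
  · rw [hQ, Matrix.conjTranspose_mul, Matrix.mul_assoc, ← Matrix.mul_assoc _ _ QLᴴ, hD2,
      Matrix.one_mul, hQL2]
  · intro i j h
    rcases i with i | i <;> rcases j with j | j <;>
      simp only [Sum.elim_inl, Sum.elim_inr] at h <;>
      simp only [hRdef, Matrix.fromBlocks_apply₁₁, Matrix.fromBlocks_apply₁₂,
        Matrix.fromBlocks_apply₂₁, Matrix.fromBlocks_apply₂₂, Matrix.zero_apply]
    · exact hRL' ▸ hRL (Sum.inl i) j h
    · exact absurd h (by have := j.isLt; omega)
    · exact hRR i j (by omega)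
  · have hRLeq : RL = Matrix.fromRows RL' 0 := by
      ext (i | i) j
      · simp [hRL']
      · simp only [Matrix.fromRows, Matrix.of_apply, Sum.elim_inr, Matrix.zero_apply]
        exact hRL (Sum.inr i) j (by simp only [Sum.elim_inr]; have := j.isLt; omega)
    have hBeq : B = Matrix.fromRows B₁₂ B₂₂ := by
      ext (i | i) j <;> simp [hB₁₂, hB₂₂]
    have h1 : (Matrix.fromBlocks 1 0 0 QR : Matrix (Fin n₁ ⊕ Fin m₂) (Fin n₁ ⊕ Fin m₂) ℂ) * R = Matrix.fromBlocks RL' B₁₂ 0 B₂₂ := by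
      rw [hRdef, Matrix.fromBlocks_multiply]
      simp [hR]
    have h2 : Matrix.fromBlocks RL' B₁₂ 0 B₂₂ = Matrix.fromCols RL B := by
      rw [hRLeq, hBeq, Matrix.fromCols_fromRows_eq_fromBlocks]
    rw [hQ, Matrix.mul_assoc, h1, h2, Matrix.mul_fromCols, ← hL, hB, ← Matrix.mul_assoc,
      hQL2, Matrix.one_mul, Matrix.fromCols_fromRows_eq_fromBlocks]
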